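/- For n ≥ 2, the minimum δ(n) of 1 - 1/p_1 - ... - 1/p_n over collections of n distinct primes with positive value is attained, i.e., the infimum is achieved by some collection of n distinct primes. -/
import Mathlib

open Finset in
/-- Auxiliary set: positive values `t - ∑ 1/p` over `n`-element sets of primes `≥ m`. -/
def auxS (t : ℝ) (n m : ℕ) : Set ℝ :=
  {x : ℝ | 0 < x ∧ ∃ s : Finset ℕ, s.card = n ∧ (∀ p ∈ s, p.Prime ∧ m ≤ p) ∧
    x = t - ∑ p ∈ s, (1 : ℝ) / p}

lemma auxS_min : ∀ (n : ℕ) (t : ℝ) (m : ℕ), (auxS t n m).Nonempty →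
    ∃ x, IsLeast (auxS t n m) x := by
  intro n
  induction n with
  | zero =>
    rintro t m ⟨x, hx, s, hcard, -, hxs⟩
    rw [Finset.card_eq_zero] at hcard
    subst hcard
    simp only [Finset.sum_empty, sub_zero] at hxs
    subst hxs
    refine ⟨x, ⟨hx, ∅, by simp⟩, ?_⟩
    rintro y ⟨hy, s, hc, -, hys⟩
    rw [Finset.card_eq_zero] at hc
    subst hc
    simp only [Finset.sum_empty, sub_zero] at hys
    exact le_of_eq hys.symm
  | succ n ih =>
    rintro t m ⟨v0, hv0pos, s0, hs0card, hs0p, hv0eq⟩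
    classical
    have hs0ne : s0.Nonempty := Finset.card_pos.mp (by omega)
    have hsum0 : (0:ℝ) < ∑ p ∈ s0, (1:ℝ)/p := by
      refine Finset.sum_pos (fun p hp => one_div_pos.mpr ?_) hs0ne
      exact_mod_cast (hs0p p hp).1.pos
    have htv : 0 < t - v0 := by
      have : t - v0 = ∑ p ∈ s0, (1:ℝ)/p := by rw [hv0eq]; ring
      rw [this]; exact hsum0
    set c : ℝ := t - v0 with hc
    set B : ℕ := ⌈((n:ℝ) + 1) / c⌉₊ with hB
    set P : Finset ℕ := (Finset.range (B+1)).filter (fun p => p.Prime ∧ m ≤ p) with hP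
    -- cover lemma
    have hcover : ∀ x ∈ auxS t (n+1) m, x ≤ v0 →
        ∃ p ∈ P, x ∈ auxS (t - 1/p) n (p+1) := by
      rintro x ⟨hxpos, s, hcard, hsp, hxeq⟩ hxle
      have hsne : s.Nonempty := Finset.card_pos.mp (by omega)
      set p1 := s.min' hsne with hp1def
      have hp1mem : p1 ∈ s := s.min'_mem hsne
      have hp1prime : p1.Prime := (hsp p1 hp1mem).1
      have hp1pos : (0:ℝ) < (p1:ℝ) := by exact_mod_cast hp1prime.pos
      -- bound on p1
      have hsumle : ∑ p ∈ s, (1:ℝ)/p ≤ (s.card : ℕ) • ((1:ℝ)/p1) := by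
        refine Finset.sum_le_card_nsmul s _ _ (fun p hp => ?_)
        have hple : p1 ≤ p := s.min'_le p hp
        exact one_div_le_one_div_of_le hp1pos (by exact_mod_cast hple)
      have hsumge : c ≤ ∑ p ∈ s, (1:ℝ)/p := by
        have : x = t - ∑ p ∈ s, (1:ℝ)/p := hxeq
        rw [hc]; linarith
      have hcard' : (s.card : ℕ) • ((1:ℝ)/p1) = ((n:ℝ)+1) * (1/p1) := by
        rw [hcard]; push_cast [nsmul_eq_mul]; ring
      have hboundR : (p1:ℝ) ≤ ((n:ℝ)+1)/c := by
        rw [le_div_iff₀ htv]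
        have h1 : c * (p1:ℝ) ≤ (((n:ℝ)+1) * (1/p1)) * (p1:ℝ) := by
          have := le_trans hsumge (hsumle.trans_eq hcard')
          nlinarith
        calc (p1:ℝ) * c = c * (p1:ℝ) := by ring
          _ ≤ (((n:ℝ)+1) * (1/p1)) * (p1:ℝ) := h1
          _ = ((n:ℝ)+1) := by field_simp
      have hp1B : p1 ≤ B := by
        have : (p1:ℝ) ≤ (B:ℝ) := hboundR.trans (Nat.le_ceil _)
        exact_mod_cast this
      refine ⟨p1, ?_, ?_⟩
      · rw [hP]
        simp only [Finset.mem_filter, Finset.mem_range]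
        exact ⟨by omega, hp1prime, (hsp p1 hp1mem).2⟩
      · refine ⟨hxpos, s.erase p1, ?_, ?_, ?_⟩
        · rw [Finset.card_erase_of_mem hp1mem, hcard]; omega
        · intro p hp
          have hps : p ∈ s := Finset.mem_of_mem_erase hp
          have hne : p ≠ p1 := Finset.ne_of_mem_erase hp
          have : p1 ≤ p := s.min'_le p hps
          exact ⟨(hsp p hps).1, by omega⟩
        · have hsplit : (1:ℝ)/p1 + ∑ p ∈ s.erase p1, (1:ℝ)/p = ∑ p ∈ s, (1:ℝ)/p :=
            Finset.add_sum_erase s (fun p => (1:ℝ)/(p:ℕ)) hp1mem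
          rw [hxeq, ← hsplit]; ring
    -- each fiber is contained in the big set
    have hsubset : ∀ p ∈ P, auxS (t - 1/p) n (p+1) ⊆ auxS t (n+1) m := by
      intro p hp
      rw [hP] at hp
      simp only [Finset.mem_filter, Finset.mem_range] at hp
      obtain ⟨-, hpprime, hmp⟩ := hp
      rintro y ⟨hy, s, hcd, hsp, hyeq⟩
      have hpns : p ∉ s := fun h => by have := (hsp p h).2; omega
      refine ⟨hy, insert p s, ?_, ?_, ?_⟩
      · rw [Finset.card_insert_of_notMem hpns, hcd]
      · intro q hq
        rcases Finset.mem_insert.mp hq with h | h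
        · subst h; exact ⟨hpprime, hmp⟩
        · exact ⟨(hsp q h).1, by have := (hsp q h).2; omega⟩
      · rw [Finset.sum_insert hpns, hyeq]; ring
    -- the minimizing function
    set f : ℕ → ℝ := fun p =>
      if h : (auxS (t - 1/p) n (p+1)).Nonempty then (ih (t - 1/p) (p+1) h).choose else 0
      with hf
    have hfleast : ∀ p : ℕ, (h : (auxS (t - 1/p) n (p+1)).Nonempty) →
        IsLeast (auxS (t - 1/p) n (p+1)) (f p) := by
      intro p h
      rw [hf]
      simp only [dif_pos h]
      exact (ih (t - 1/p) (p+1) h).choose_spec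
    set Q : Finset ℕ := P.filter (fun p => (auxS (t - 1/p) n (p+1)).Nonempty) with hQ
    have hv0mem : v0 ∈ auxS t (n+1) m := ⟨hv0pos, s0, hs0card, hs0p, hv0eq⟩
    obtain ⟨q0, hq0P, hq0v⟩ := hcover v0 hv0mem le_rfl
    have hq0Q : q0 ∈ Q := by
      rw [hQ]; exact Finset.mem_filter.mpr ⟨hq0P, ⟨v0, hq0v⟩⟩
    obtain ⟨pstar, hpstarQ, hpstarmin⟩ := Q.exists_min_image f ⟨q0, hq0Q⟩
    rw [hQ] at hpstarQ
    obtain ⟨hpstarP, hpstarne⟩ := Finset.mem_filter.mp hpstarQ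
    have hleast := hfleast pstar hpstarne
    refine ⟨f pstar, hsubset pstar hpstarP hleast.1, ?_⟩
    intro y hy
    have hfv0 : f q0 ≤ v0 := (hfleast q0 ⟨v0, hq0v⟩).2 hq0v
    rcases le_or_gt y v0 with hle | hlt
    · obtain ⟨q, hqP, hqy⟩ := hcover y hy hle
      have hqQ : q ∈ Q := by rw [hQ]; exact Finset.mem_filter.mpr ⟨hqP, ⟨y, hqy⟩⟩
      exact (hpstarmin q hqQ).trans ((hfleast q ⟨y, hqy⟩).2 hqy)
    · exact ((hpstarmin q0 hq0Q).trans hfv0).trans hlt.le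


/-- `delta n` is the infimum of the positive values `1 - 1/p₁ - ⋯ - 1/pₙ`
over all collections of `n` distinct primes `p₁, …, pₙ`. -/
noncomputable def delta (n : ℕ) : ℝ :=
  sInf {x : ℝ | 0 < x ∧ ∃ s : Finset ℕ, s.card = n ∧ (∀ p ∈ s, p.Prime) ∧
    x = 1 - ∑ p ∈ s, (1 : ℝ) / p}

/-- For `n ≥ 2`, the infimum `δ(n)` is positive and is attained by some
collection of `n` distinct primes. -/
theorem stmt_5 (n : ℕ) (hn : 2 ≤ n) :
    0 < delta n ∧ ∃ s : Finset ℕ, s.card = n ∧ (∀ p ∈ s, p.Prime) ∧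
      1 - ∑ p ∈ s, (1 : ℝ) / p = delta n := by
  have hseteq : {x : ℝ | 0 < x ∧ ∃ s : Finset ℕ, s.card = n ∧ (∀ p ∈ s, p.Prime) ∧
      x = 1 - ∑ p ∈ s, (1 : ℝ) / p} = auxS 1 n 0 := by
    unfold auxS
    ext x
    simp only [Set.mem_setOf_eq, Nat.zero_le, and_true]
  -- nonemptiness: pick n primes all > n
  have hinf : ({p : ℕ | p.Prime} \ Set.Iic n).Infinite :=
    Set.Infinite.diff Nat.infinite_setOf_prime (Set.finite_Iic n)
  obtain ⟨s, hsub, hscard⟩ := hinf.exists_subset_card_eq n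
  have hsprop : ∀ p ∈ s, p.Prime ∧ n < p := by
    intro p hp
    have := hsub hp
    simp only [Set.mem_diff, Set.mem_setOf_eq, Set.mem_Iic, not_le] at this
    exact this
  have hsumlt : ∑ p ∈ s, (1:ℝ)/p < 1 := by
    have hle : ∑ p ∈ s, (1:ℝ)/p ≤ (s.card : ℕ) • ((1:ℝ)/((n:ℝ)+1)) := by
      refine Finset.sum_le_card_nsmul s _ _ (fun p hp => ?_)
      have hpn : n + 1 ≤ p := (hsprop p hp).2
      refine one_div_le_one_div_of_le (by positivity) ?_
      exact_mod_cast hpn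
    have : (s.card : ℕ) • ((1:ℝ)/((n:ℝ)+1)) = (n:ℝ)/((n:ℝ)+1) := by
      rw [hscard]; push_cast [nsmul_eq_mul]; ring
    rw [this] at hle
    have hlt : (n:ℝ)/((n:ℝ)+1) < 1 := by
      rw [div_lt_one (by positivity)]; linarith
    linarith
  have hne : (auxS 1 n 0).Nonempty := by
    refine ⟨1 - ∑ p ∈ s, (1:ℝ)/p, by linarith, s, hscard, ?_, rfl⟩
    exact fun p hp => ⟨(hsprop p hp).1, Nat.zero_le p⟩
  obtain ⟨x, hxleast⟩ := auxS_min n 1 0 hne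
  have hdelta : delta n = x := by
    rw [delta, hseteq]
    exact hxleast.csInf_eq
  obtain ⟨hxpos, t, htcard, htp, hxeq⟩ := hxleast.1
  exact ⟨hdelta ▸ hxpos, t, htcard, fun p hp => (htp p hp).1, by rw [hdelta, hxeq]⟩
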